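/- For every nonnegative integer n, Σ_{j ∈ ℤ} p(n - 3j(3j-1)) ≡ Q_2(n) (mod 2), where p(x) = 0 for x negative. -/

import Mathlib

open Finset

/-- Euler's partition function. -/
def pnat (n : ℕ) : ℕ := Fintype.card (Nat.Partition n)

/-- `p` extended to integers, `0` on negatives. -/
def pz (x : ℤ) : ℤ := if 0 ≤ x then pnat x.toNat else 0

/-- Number of partitions of `n` into distinct parts not congruent to ±2 mod 6. -/
def Q2 (n : ℕ) : ℕ :=
  Fintype.card {P : Nat.Partition n // P.parts.Nodup ∧ ∀ i ∈ P.parts, i % 6 ≠ 2 ∧ i % 6 ≠ 4}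

/- ### Auxiliary machinery (copied from Archive/Wiedijk100Theorems/Partition.lean) -/
open PowerSeries

namespace Theorems100

noncomputable section

variable {α : Type*}

open Finset

open scoped Classical

/-- The partial product for the generating function for odd partitions.
TODO: As `m` tends to infinity, this converges (in the `X`-adic topology).

If `m` is sufficiently large, the `i`th coefficient gives the number of odd partitions of the
natural number `i`: proved in `oddGF_prop`.
It is stated for an arbitrary field `α`, though it usually suffices to use `ℚ` or `ℝ`.
-/
def partialOddGF (m : ℕ) [Field α] :=
  ∏ i ∈ range m, (1 - (X : PowerSeries α) ^ (2 * i + 1))⁻¹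

/-- The partial product for the generating function for distinct partitions.
TODO: As `m` tends to infinity, this converges (in the `X`-adic topology).

If `m` is sufficiently large, the `i`th coefficient gives the number of distinct partitions of the
natural number `i`: proved in `distinctGF_prop`.
It is stated for an arbitrary commutative semiring `α`, though it usually suffices to use `ℕ`, `ℚ`
or `ℝ`.
-/
def partialDistinctGF (m : ℕ) [CommSemiring α] :=
  ∏ i ∈ range m, (1 + (X : PowerSeries α) ^ (i + 1))

open Finset.HasAntidiagonal

universe u
variable {ι : Type u}

/-- A convenience constructor for the power series whose coefficients indicate a subset. -/
def indicatorSeries (α : Type*) [Semiring α] (s : Set ℕ) : PowerSeries α :=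
  PowerSeries.mk fun n => if n ∈ s then 1 else 0

theorem coeff_indicator (s : Set ℕ) [Semiring α] (n : ℕ) :
    coeff n (indicatorSeries α s) = if n ∈ s then 1 else 0 :=
  coeff_mk _ _

theorem coeff_indicator_pos (s : Set ℕ) [Semiring α] (n : ℕ) (h : n ∈ s) :
    coeff n (indicatorSeries α s) = 1 := by rw [coeff_indicator, if_pos h]

theorem coeff_indicator_neg (s : Set ℕ) [Semiring α] (n : ℕ) (h : n ∉ s) :
    coeff n (indicatorSeries α s) = 0 := by rw [coeff_indicator, if_neg h]

theorem constantCoeff_indicator (s : Set ℕ) [Semiring α] :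
    constantCoeff (indicatorSeries α s) = if 0 ∈ s then 1 else 0 :=
  rfl

theorem two_series (i : ℕ) [Semiring α] :
    1 + (X : PowerSeries α) ^ i.succ = indicatorSeries α {0, i.succ} := by
  ext n
  simp only [coeff_indicator, coeff_one, coeff_X_pow, Set.mem_insert_iff, Set.mem_singleton_iff,
    map_add]
  cases' n with d
  · simp [(Nat.succ_ne_zero i).symm]
  · simp [Nat.succ_ne_zero d]

theorem num_series' [Field α] (i : ℕ) :
    (1 - (X : PowerSeries α) ^ (i + 1))⁻¹ = indicatorSeries α {k | i + 1 ∣ k} := by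
  rw [PowerSeries.inv_eq_iff_mul_eq_one]
  · ext n
    cases n with
    | zero => simp [mul_sub, zero_pow, constantCoeff_indicator]
    | succ n =>
      simp only [coeff_one, if_false, mul_sub, mul_one, coeff_indicator,
        LinearMap.map_sub, reduceCtorEq]
      simp_rw [coeff_mul, coeff_X_pow, coeff_indicator, @boole_mul _ _ _ _]
      simp only [Set.mem_setOf_eq]
      erw [sum_ite, sum_ite]
      simp_rw [@filter_filter _ _ _ _ _, sum_const_zero, add_zero, sum_const, nsmul_eq_mul, mul_one,
        sub_eq_iff_eq_add, zero_add]
      symm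
      split_ifs with h
      · suffices #{a ∈ antidiagonal (n + 1) | i + 1 ∣ a.fst ∧ a.snd = i + 1} = 1 by
          convert congr_arg ((↑) : ℕ → α) this; norm_cast
        rw [card_eq_one]
        cases' h with p hp
        refine ⟨((i + 1) * (p - 1), i + 1), ?_⟩
        ext ⟨a₁, a₂⟩
        simp only [mem_filter, Prod.mk.injEq, Finset.HasAntidiagonal.mem_antidiagonal, mem_singleton]
        constructor
        · rintro ⟨a_left, ⟨a, rfl⟩, rfl⟩
          refine ⟨?_, rfl⟩
          rw [Nat.mul_sub_left_distrib, ← hp, ← a_left, mul_one, Nat.add_sub_cancel]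
        · rintro ⟨rfl, rfl⟩
          match p with
          | 0 => rw [mul_zero] at hp; cases hp
          | p + 1 => rw [hp]; simp [mul_add]
      · suffices #{a ∈ antidiagonal (n + 1) | i + 1 ∣ a.fst ∧ a.snd = i + 1} = 0 by
          convert congr_arg ((↑) : ℕ → α) this; norm_cast
        rw [card_eq_zero]
        apply eq_empty_of_forall_notMem
        simp only [Prod.forall, mem_filter, not_and, Finset.HasAntidiagonal.mem_antidiagonal]
        rintro _ h₁ h₂ ⟨a, rfl⟩ rfl
        apply h
        simp [← h₂]
  · simp [zero_pow]

def mkOdd : ℕ ↪ ℕ :=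
  ⟨fun i => 2 * i + 1, fun x y h => by linarith⟩

-- The main workhorse of the partition theorem proof.
theorem partialGF_prop (α : Type*) [CommSemiring α] (n : ℕ) (s : Finset ℕ) (hs : ∀ i ∈ s, 0 < i)
    (c : ℕ → Set ℕ) (hc : ∀ i, i ∉ s → 0 ∈ c i) :
    #{p : n.Partition | (∀ j, p.parts.count j ∈ c j) ∧ ∀ j ∈ p.parts, j ∈ s} =
      coeff n (∏ i ∈ s, indicatorSeries α ((· * i) '' c i)) := by
  simp_rw [coeff_prod, coeff_indicator, prod_boole, sum_boole]
  apply congr_arg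
  simp only [mem_univ, forall_true_left, not_and, not_forall, exists_prop,
    Set.mem_image, not_exists]
  set φ : (a : Nat.Partition n) →
    a ∈ filter (fun p ↦ (∀ (j : ℕ), Multiset.count j p.parts ∈ c j) ∧ ∀ j ∈ p.parts, j ∈ s) univ →
    ℕ →₀ ℕ := fun p _ => {
      toFun := fun i => Multiset.count i p.parts • i
      support := Finset.filter (fun i => i ≠ 0) p.parts.toFinset
      mem_support_toFun := fun a => by
        simp only [smul_eq_mul, ne_eq, mul_eq_zero, Multiset.count_eq_zero]
        rw [not_or, not_not]
        simp only [Multiset.mem_toFinset, not_not, mem_filter] }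
  refine Finset.card_bij φ ?_ ?_ ?_
  · intro a ha
    simp only [φ, not_forall, not_exists, not_and, exists_prop, mem_filter]
    rw [mem_finsuppAntidiag]
    dsimp only [ne_eq, smul_eq_mul, id_eq, eq_mpr_eq_cast, le_eq_subset, Finsupp.coe_mk]
    simp only [mem_univ, forall_true_left, not_and, not_forall, exists_prop,
      mem_filter, true_and] at ha
    refine ⟨⟨?_, fun i ↦ ?_⟩, fun i _ ↦ ⟨a.parts.count i, ha.1 i, rfl⟩⟩
    · conv_rhs => simp [← a.parts_sum]
      rw [sum_multiset_count_of_subset _ s]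
      · simp only [smul_eq_mul]
      · intro i
        simp only [Multiset.mem_toFinset, not_not, mem_filter]
        apply ha.2
    · simp only [ne_eq, Multiset.mem_toFinset, not_not, mem_filter, and_imp]
      exact fun hi _ ↦ ha.2 i hi
  · intro p₁ hp₁ p₂ hp₂ h
    apply Nat.Partition.ext
    simp only [true_and, mem_univ, mem_filter] at hp₁ hp₂
    ext i
    simp only [φ, ne_eq, Multiset.mem_toFinset, not_not, smul_eq_mul, Finsupp.mk.injEq] at h
    by_cases hi : i = 0
    · rw [hi]
      rw [Multiset.count_eq_zero_of_notMem]
      · rw [Multiset.count_eq_zero_of_notMem]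
        intro a; exact Nat.lt_irrefl 0 (hs 0 (hp₂.2 0 a))
      intro a; exact Nat.lt_irrefl 0 (hs 0 (hp₁.2 0 a))
    · rw [← mul_left_inj' hi]
      rw [funext_iff] at h
      exact h.2 i
  · simp only [φ, mem_filter, mem_finsuppAntidiag, mem_univ, exists_prop, true_and, and_assoc]
    rintro f ⟨hf, hf₃, hf₄⟩
    have hf' : f ∈ finsuppAntidiag s n := mem_finsuppAntidiag.mpr ⟨hf, hf₃⟩
    simp only [mem_finsuppAntidiag] at hf'
    refine ⟨⟨∑ i ∈ s, Multiset.replicate (f i / i) i, ?_, ?_⟩, ?_, ?_, ?_⟩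
    · intro i hi
      simp only [exists_prop, Multiset.mem_sum, mem_map, Function.Embedding.coeFn_mk] at hi
      rcases hi with ⟨t, ht, z⟩
      apply hs
      rwa [Multiset.eq_of_mem_replicate z]
    · simp_rw [Multiset.sum_sum, Multiset.sum_replicate, Nat.nsmul_eq_mul]
      rw [← hf'.1]
      refine sum_congr rfl fun i hi => Nat.div_mul_cancel ?_
      rcases hf₄ i hi with ⟨w, _, hw₂⟩
      rw [← hw₂]
      exact dvd_mul_left _ _
    · intro i
      simp_rw [Multiset.count_sum', Multiset.count_replicate, sum_ite_eq']
      split_ifs with h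
      · rcases hf₄ i h with ⟨w, hw₁, hw₂⟩
        rwa [← hw₂, Nat.mul_div_cancel _ (hs i h)]
      · exact hc _ h
    · intro i hi
      rw [Multiset.mem_sum] at hi
      rcases hi with ⟨j, hj₁, hj₂⟩
      rwa [Multiset.eq_of_mem_replicate hj₂]
    · ext i
      simp_rw [Multiset.count_sum', Multiset.count_replicate, sum_ite_eq']
      simp only [ne_eq, Multiset.mem_toFinset, not_not, smul_eq_mul, ite_mul,
        zero_mul, Finsupp.coe_mk]
      split_ifs with h
      · apply Nat.div_mul_cancel
        rcases hf₄ i h with ⟨w, _, hw₂⟩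
        apply Dvd.intro_left _ hw₂
      · apply symm
        rw [← Finsupp.notMem_support_iff]
        exact notMem_mono hf'.2 h

theorem partialOddGF_prop [Field α] (n m : ℕ) :
    #{p : n.Partition | ∀ j ∈ p.parts, j ∈ (range m).map mkOdd} = coeff (R := α) n (partialOddGF m) := by
  rw [partialOddGF]
  convert partialGF_prop α n
    ((range m).map mkOdd) _ (fun _ => Set.univ) (fun _ _ => trivial) using 2
  · congr
    simp only [true_and, forall_const, Set.mem_univ]
  · rw [Finset.prod_map]
    simp_rw [num_series']
    congr! 2 with x
    ext k
    constructor
    · rintro ⟨p, rfl⟩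
      refine ⟨p, ⟨⟩, ?_⟩
      apply mul_comm
    rintro ⟨a_w, -, rfl⟩
    apply Dvd.intro_left a_w rfl
  · intro i
    rw [mem_map]
    rintro ⟨a, -, rfl⟩
    exact Nat.succ_pos _

/-- If m is big enough, the partial product's coefficient counts the number of odd partitions -/
theorem oddGF_prop [Field α] (n m : ℕ) (h : n < m * 2) :
    #(Nat.Partition.odds n) = coeff (R := α) n (partialOddGF m) := by
  rw [← partialOddGF_prop, Nat.Partition.odds, Nat.Partition.restricted]
  apply congrArg (Nat.cast : ℕ → α)
  apply congrArg card
  apply Finset.filter_congr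
  intro p _
  apply forall₂_congr
  intro i hi
  have hin : i ≤ n := by
    simpa [p.parts_sum] using Multiset.single_le_sum (fun _ _ => Nat.zero_le _) _ hi
  simp only [mkOdd, exists_prop, mem_range, Function.Embedding.coeFn_mk, mem_map]
  constructor
  · intro hi₂
    have := Nat.mod_add_div i 2
    rw [Nat.not_even_iff] at hi₂
    rw [hi₂, add_comm] at this
    refine ⟨i / 2, ?_, this⟩
    rw [Nat.div_lt_iff_lt_mul zero_lt_two]
    exact lt_of_le_of_lt hin h
  · rintro ⟨a, -, rfl⟩
    rw [even_iff_two_dvd]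
    apply Nat.two_not_dvd_two_mul_add_one

theorem partialDistinctGF_prop [CommSemiring α] (n m : ℕ) :
    #{p : n.Partition |
        p.parts.Nodup ∧ ∀ j ∈ p.parts, j ∈ (range m).map ⟨Nat.succ, Nat.succ_injective⟩} =
      coeff (R := α) n (partialDistinctGF m) := by
  rw [partialDistinctGF]
  convert partialGF_prop α n
    ((range m).map ⟨Nat.succ, Nat.succ_injective⟩) _ (fun _ => {0, 1}) (fun _ _ => Or.inl rfl)
    using 2
  · congr! with p
    rw [Multiset.nodup_iff_count_le_one]
    congr! 1 with i
    rcases Multiset.count i p.parts with (_ | _ | ms) <;> simp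
  · simp_rw [Finset.prod_map, two_series]
    congr with i
    simp [Set.image_pair]
  · simp only [mem_map, Function.Embedding.coeFn_mk]
    rintro i ⟨_, _, rfl⟩
    apply Nat.succ_pos

/-- If m is big enough, the partial product's coefficient counts the number of distinct partitions
-/
theorem distinctGF_prop [CommSemiring α] (n m : ℕ) (h : n < m + 1) :
    #(Nat.Partition.distincts n) = coeff (R := α) n (partialDistinctGF m) := by
  rw [← partialDistinctGF_prop, Nat.Partition.distincts]
  congr with p
  apply (and_iff_left _).symm
  intro i hi
  have : i ≤ n := by
    simpa [p.parts_sum] using Multiset.single_le_sum (fun _ _ => Nat.zero_le _) _ hi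
  simp only [mkOdd, exists_prop, mem_range, Function.Embedding.coeFn_mk, mem_map]
  refine ⟨i - 1, ?_, Nat.succ_pred_eq_of_pos (p.parts_pos hi)⟩
  rw [tsub_lt_iff_right (Nat.one_le_iff_ne_zero.mpr (p.parts_pos hi).ne')]
  exact lt_of_le_of_lt this h

/-- The key proof idea for the partition theorem, showing that the generating functions for both
sequences are ultimately the same (since the factor converges to 0 as m tends to infinity).
It's enough to not take the limit though, and just consider large enough `m`.
-/
theorem same_gf [Field α] (m : ℕ) :
    (partialOddGF m * (range m).prod fun i => 1 - (X : PowerSeries α) ^ (m + i + 1)) =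
      partialDistinctGF m := by
  rw [partialOddGF, partialDistinctGF]
  induction' m with m ih
  · simp
  set! π₀ : PowerSeries α := ∏ i ∈ range m, (1 - X ^ (m + 1 + i + 1)) with hπ₀
  set! π₁ : PowerSeries α := ∏ i ∈ range m, (1 - X ^ (2 * i + 1))⁻¹ with hπ₁
  set! π₂ : PowerSeries α := ∏ i ∈ range m, (1 - X ^ (m + i + 1)) with hπ₂
  set! π₃ : PowerSeries α := ∏ i ∈ range m, (1 + X ^ (i + 1)) with hπ₃
  rw [← hπ₃] at ih
  have h : constantCoeff (R := α) (1 - X ^ (2 * m + 1)) ≠ 0 := by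
    rw [RingHom.map_sub, RingHom.map_pow, constantCoeff_one, constantCoeff_X,
      zero_pow (2 * m).succ_ne_zero, sub_zero]
    exact one_ne_zero
  calc
    (∏ i ∈ range (m + 1), (1 - X ^ (2 * i + 1))⁻¹) *
          ∏ i ∈ range (m + 1), (1 - X ^ (m + 1 + i + 1)) =
        π₁ * (1 - X ^ (2 * m + 1))⁻¹ * (π₀ * (1 - X ^ (m + 1 + m + 1))) := by
      rw [prod_range_succ _ m, ← hπ₁, prod_range_succ _ m, ← hπ₀]
    _ = π₁ * (1 - X ^ (2 * m + 1))⁻¹ * (π₀ * ((1 + X ^ (m + 1)) * (1 - X ^ (m + 1)))) := by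
      rw [← sq_sub_sq, one_pow, add_assoc _ m 1, ← two_mul (m + 1), pow_mul']
    _ = π₀ * (1 - X ^ (m + 1)) * (1 - X ^ (2 * m + 1))⁻¹ * (π₁ * (1 + X ^ (m + 1))) := by ring
    _ =
        (∏ i ∈ range (m + 1), (1 - X ^ (m + 1 + i))) * (1 - X ^ (2 * m + 1))⁻¹ *
          (π₁ * (1 + X ^ (m + 1))) := by
      rw [prod_range_succ', add_zero, hπ₀]; simp_rw [← add_assoc]
    _ = π₂ * (1 - X ^ (m + 1 + m)) * (1 - X ^ (2 * m + 1))⁻¹ * (π₁ * (1 + X ^ (m + 1))) := by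
      rw [add_right_comm, hπ₂, ← prod_range_succ]; simp_rw [add_right_comm]
    _ = π₂ * (1 - X ^ (2 * m + 1)) * (1 - X ^ (2 * m + 1))⁻¹ * (π₁ * (1 + X ^ (m + 1))) := by
      rw [two_mul, add_right_comm _ m 1]
    _ = (1 - X ^ (2 * m + 1)) * (1 - X ^ (2 * m + 1))⁻¹ * π₂ * (π₁ * (1 + X ^ (m + 1))) := by ring
    _ = π₂ * (π₁ * (1 + X ^ (m + 1))) := by rw [PowerSeries.mul_inv_cancel _ h, one_mul]
    _ = π₁ * π₂ * (1 + X ^ (m + 1)) := by ring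
    _ = π₃ * (1 + X ^ (m + 1)) := by rw [ih]
    _ = _ := by rw [prod_range_succ]

theorem same_coeffs [Field α] (m n : ℕ) (h : n ≤ m) :
    coeff (R := α) n (partialOddGF m) = coeff (R := α) n (partialDistinctGF m) := by
  rw [← same_gf, coeff_mul_prod_one_sub_of_lt_order]
  rintro i -
  rw [order_X_pow]
  exact mod_cast Nat.lt_succ_of_le (le_add_right h)

end
end Theorems100
namespace Stmt11
open Finset PowerSeries
noncomputable section

abbrev R2 := ZMod 2

instance : CharP (PowerSeries R2) 2 :=
  charP_of_injective_ringHom (PowerSeries.C_injective (R := R2)) 2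

/-- `∏_{k=i}^{n-1} (1 + X^(6(k+1)))`. -/
def Qp (i n : ℕ) : PowerSeries R2 := ∏ k ∈ Finset.Ico i n, (1 + X ^ (6 * (k + 1)))

def Lser (n : ℕ) : PowerSeries R2 :=
  ∑ i ∈ range (n + 1), Qp i n * X ^ (3 * i * (i + 1 + 2 * n))

def Pent (n : ℕ) : PowerSeries R2 :=
  (∑ k ∈ range (n + 1), X ^ (3 * k * (3 * k + 1))) +
    ∑ k ∈ range n, X ^ (3 * (k + 1) * (3 * k + 2))

lemma qp_succ_left {m n : ℕ} (h : m < n) :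
    Qp m n = (1 + X ^ (6 * (m + 1))) * Qp (m + 1) n := by
  rw [Qp, Qp, Finset.prod_eq_prod_Ico_succ_bot h]

lemma qp_succ_top {i n : ℕ} (h : i ≤ n) :
    Qp i (n + 1) = Qp i n * (1 + X ^ (6 * (n + 1))) := by
  rw [Qp, Qp, Finset.prod_Ico_succ_top h]

lemma qp_self (n : ℕ) : Qp n n = 1 := by simp [Qp]

lemma two_zero : (2 : PowerSeries R2) = 0 := by
  exact_mod_cast CharP.cast_eq_zero (PowerSeries R2) 2

lemma tele (n : ℕ) : ∀ m, 1 ≤ m → m ≤ n →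
    (∑ i ∈ range m,
      Qp i n * X ^ (3 * i * (i + 1 + 2 * n)) * (X ^ (6 * i) + X ^ (6 * i + 6 * (n + 1)) + 1))
      = Qp m n * X ^ (3 * m * (m + 1 + 2 * n)) * (1 + X ^ (6 * m)) := by
  intro m
  induction m with
  | zero => omega
  | succ m ih =>
    intro _ hmn
    rcases Nat.eq_zero_or_pos m with rfl | hm
    · -- base case m+1 = 1
      rw [sum_range_one]
      rw [qp_succ_left (show 0 < n by omega)]
      have e1 : 3 * 0 * (0 + 1 + 2 * n) = 0 := by ring
      have e2 : 3 * 1 * (1 + 1 + 2 * n) = 6 * n + 6 := by ring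
      rw [e1, e2]
      have : (X ^ (6 * 0) + X ^ (6 * 0 + 6 * (n + 1)) + 1 : PowerSeries R2)
          = X ^ (6 * (n + 1)) := by
        have h2 := two_zero
        ring_nf
        linear_combination (X : PowerSeries R2) ^ 0 * h2
      rw [this]
      have h6 : (6 : ℕ) * (n + 1) = 6 * n + 6 := by ring
      have h61 : (6 : ℕ) * 1 = 6 := by norm_num
      rw [h6, h61]
      ring
    · rw [sum_range_succ, ih hm (by omega)]
      have key : (1 + X ^ (6 * m) + (X ^ (6 * m) + X ^ (6 * m + 6 * (n + 1)) + 1)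
          : PowerSeries R2) = X ^ (6 * m + 6 * (n + 1)) := by
        have h2 := two_zero
        ring_nf
        linear_combination ((X : PowerSeries R2) ^ (6 * m) + 1) * h2
      have : Qp m n * X ^ (3 * m * (m + 1 + 2 * n)) * (1 + X ^ (6 * m)) +
            Qp m n * X ^ (3 * m * (m + 1 + 2 * n)) * (X ^ (6 * m) + X ^ (6 * m + 6 * (n + 1)) + 1)
          = Qp m n * X ^ (3 * m * (m + 1 + 2 * n)) * X ^ (6 * m + 6 * (n + 1)) := by
        rw [← mul_add, key]
      rw [this, qp_succ_left (show m < n by omega)]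
      have eexp : 3 * m * (m + 1 + 2 * n) + (6 * m + 6 * (n + 1))
          = 3 * (m + 1) * (m + 1 + 1 + 2 * n) := by ring
      rw [mul_assoc, ← pow_add, eexp]
      ring

end
end Stmt11
namespace Stmt11
open Finset PowerSeries
noncomputable section

lemma term_split (n : ℕ) : ∀ i ∈ range (n + 1),
    Qp i (n + 1) * X ^ (3 * i * (i + 1 + 2 * (n + 1)))
      = Qp i n * X ^ (3 * i * (i + 1 + 2 * n))
        + Qp i n * X ^ (3 * i * (i + 1 + 2 * n))
            * (X ^ (6 * i) + X ^ (6 * i + 6 * (n + 1)) + 1) := by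
  intro i hi
  rw [qp_succ_top (Nat.lt_succ_iff.mp (mem_range.mp hi))]
  have he : 3 * i * (i + 1 + 2 * (n + 1)) = 3 * i * (i + 1 + 2 * n) + 6 * i := by ring
  rw [he, pow_add]
  have h2 := two_zero
  linear_combination (-(Qp i n * X ^ (3 * i * (i + 1 + 2 * n)))) * h2

lemma sumC (n : ℕ) :
    (∑ i ∈ range (n + 1),
      Qp i n * X ^ (3 * i * (i + 1 + 2 * n)) * (X ^ (6 * i) + X ^ (6 * i + 6 * (n + 1)) + 1))
      = X ^ (3 * (n + 1) * (3 * n + 2)) := by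
  rw [sum_range_succ]
  have h2 := two_zero
  rcases Nat.eq_zero_or_pos n with rfl | hn
  · rw [range_zero, sum_empty, zero_add, qp_self]
    norm_num
    linear_combination h2
  · rw [tele n n hn le_rfl, qp_self]
    have he : 3 * n * (n + 1 + 2 * n) + (6 * n + 6 * (n + 1)) = 3 * (n + 1) * (3 * n + 2) := by
      ring
    rw [← he, pow_add, pow_add]
    linear_combination (X ^ (3 * n * (n + 1 + 2 * n)) * (1 + X ^ (6 * n)) : PowerSeries R2) * h2

lemma lser_succ (n : ℕ) :
    Lser (n + 1) = Lser n + (X ^ (3 * (n + 1) * (3 * n + 4)) + X ^ (3 * (n + 1) * (3 * n + 2))) := by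
  rw [Lser, sum_range_succ, qp_self, one_mul, sum_congr rfl (term_split n), sum_add_distrib,
    sumC n, ← Lser]
  have ha : 3 * (n + 1) * (n + 1 + 1 + 2 * (n + 1)) = 3 * (n + 1) * (3 * n + 4) := by ring
  rw [ha]
  ring

lemma pent_succ (n : ℕ) :
    Pent (n + 1) = Pent n + (X ^ (3 * (n + 1) * (3 * n + 4)) + X ^ (3 * (n + 1) * (3 * n + 2))) := by
  simp only [Pent, sum_range_succ]
  have ha : 3 * (n + 1) * (3 * (n + 1) + 1) = 3 * (n + 1) * (3 * n + 4) := by ring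
  rw [ha]
  ring

lemma shanks (n : ℕ) : Lser n = Pent n := by
  induction n with
  | zero => simp [Lser, Pent, qp_self]
  | succ n ih => rw [lser_succ, pent_succ, ih]

end
end Stmt11
namespace Stmt11
open Finset PowerSeries Theorems100
noncomputable section

def EqF (n : ℕ) (P Q : PowerSeries R2) : Prop :=
  ∀ t, t ≤ n → coeff t P = coeff t Q

lemma EqF.rfl {n : ℕ} {P : PowerSeries R2} : EqF n P P := fun _ _ => _root_.rfl

lemma EqF.symm {n : ℕ} {P Q : PowerSeries R2} (h : EqF n P Q) : EqF n Q P :=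
  fun t ht => (h t ht).symm

lemma EqF.mul {n : ℕ} {P P' Q Q' : PowerSeries R2} (h : EqF n P P') (h' : EqF n Q Q') :
    EqF n (P * Q) (P' * Q') := by
  intro t ht
  rw [coeff_mul, coeff_mul]
  refine Finset.sum_congr _root_.rfl fun x hx => ?_
  rw [Finset.HasAntidiagonal.mem_antidiagonal] at hx
  rw [h x.1 (by omega), h' x.2 (by omega)]

lemma EqF.of_inv {n : ℕ} {P Q P' Q' : PowerSeries R2} (hPQ : P * Q = 1) (hP'Q' : P' * Q' = 1)
    (h : EqF n P P') : EqF n Q Q' := by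
  have e1 : Q = Q * (P' * Q') := by rw [hP'Q', mul_one]
  have e2 : Q' = Q * (P * Q') := by
    rw [show Q * (P * Q') = P * Q * Q' by ring, hPQ, one_mul]
  intro t ht
  conv_lhs => rw [e1]
  conv_rhs => rw [e2]
  exact EqF.mul EqF.rfl (EqF.mul h.symm EqF.rfl) t ht

/-- `Pent (n+1)` agrees with `Qp 0 (n+1)` up to degree `n`. -/
lemma pent_eqf (n : ℕ) : EqF n (Pent (n + 1)) (Qp 0 (n + 1)) := by
  intro t ht
  rw [← shanks, Lser, Finset.sum_range_succ']
  rw [map_add, map_sum]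
  have hzero : ∀ i ∈ range (n + 1),
      coeff t (Qp (i + 1) (n + 1) * X ^ (3 * (i + 1) * (i + 1 + 1 + 2 * (n + 1)))) = 0 := by
    intro i _
    rw [PowerSeries.coeff_mul_X_pow']
    have hgt : t < 3 * (i + 1) * (i + 1 + 1 + 2 * (n + 1)) := by
      have h1 : 1 ≤ i + 1 := Nat.succ_le_succ (Nat.zero_le _)
      have h2 : n + 1 ≤ i + 1 + 1 + 2 * (n + 1) := by omega
      calc t < n + 1 := by omega
        _ ≤ i + 1 + 1 + 2 * (n + 1) := h2
        _ = 1 * (i + 1 + 1 + 2 * (n + 1)) := (one_mul _).symm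
        _ ≤ 3 * (i + 1) * (i + 1 + 1 + 2 * (n + 1)) := by
            apply Nat.mul_le_mul_right; omega
    rw [if_neg (by omega)]
  rw [Finset.sum_eq_zero hzero, zero_add]
  norm_num

end
end Stmt11
namespace Stmt11
open Finset PowerSeries Theorems100
open scoped Classical
noncomputable section

def pGF (m : ℕ) : PowerSeries R2 := ∏ i ∈ range m, (1 - X ^ (i + 1))⁻¹

def OddP (m : ℕ) : PowerSeries R2 := ∏ i ∈ range m, (1 + X ^ (2 * i + 1))

def succEmb : ℕ ↪ ℕ := ⟨Nat.succ, Nat.succ_injective⟩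

lemma const_one_sub (k : ℕ) : constantCoeff (R := R2) (1 - X ^ (k + 1)) ≠ 0 := by
  rw [map_sub, map_pow, constantCoeff_one, constantCoeff_X, zero_pow k.succ_ne_zero, sub_zero]
  exact one_ne_zero

lemma oddp_inv (m : ℕ) : partialOddGF (α := R2) m * OddP m = 1 := by
  rw [partialOddGF, OddP, ← prod_mul_distrib, Finset.prod_eq_one]
  intro i _
  rw [← CharTwo.sub_eq_add]
  exact PowerSeries.inv_mul_cancel _ (const_one_sub (2 * i))

lemma psi_inv (m : ℕ) : partialDistinctGF (α := R2) m * pGF m = 1 := by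
  rw [partialDistinctGF, pGF, ← prod_mul_distrib, Finset.prod_eq_one]
  intro i _
  rw [← CharTwo.sub_eq_add]
  exact PowerSeries.mul_inv_cancel _ (const_one_sub i)

lemma eqf_oddp_pgf {n M : ℕ} (h : n ≤ M) : EqF n (OddP M) (pGF M) :=
  EqF.of_inv (oddp_inv M) (psi_inv M) fun t ht => same_coeffs M t (le_trans ht h)

lemma coeff_pGF {t m : ℕ} (h : t ≤ m) : coeff t (pGF m) = (pnat t : R2) := by
  have hprop := partialGF_prop R2 t ((range m).map succEmb)
      (by rintro i hi; rw [mem_map] at hi; obtain ⟨a, -, rfl⟩ := hi; exact a.succ_pos)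
      (fun _ => Set.univ) (fun _ _ => trivial)
  have hgf : (∏ i ∈ (range m).map succEmb, indicatorSeries R2 ((· * i) '' Set.univ)) = pGF m := by
    rw [Finset.prod_map, pGF]
    refine Finset.prod_congr _root_.rfl fun x _ => ?_
    rw [num_series']
    have himg : ((· * succEmb x) '' Set.univ) = {k : ℕ | Nat.succ x ∣ k} := by
      ext k
      constructor
      · rintro ⟨p, -, rfl⟩
        exact ⟨p, mul_comm _ _⟩
      · rintro ⟨c, rfl⟩
        exact ⟨c, Set.mem_univ c, mul_comm _ _⟩
    rw [himg]
  rw [hgf] at hprop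
  rw [← hprop]
  have hall : ∀ p : t.Partition, (∀ j, p.parts.count j ∈ (Set.univ : Set ℕ)) ∧
      ∀ j ∈ p.parts, j ∈ (range m).map succEmb := by
    intro p
    refine ⟨fun _ => trivial, fun j hj => ?_⟩
    have hj1 : 0 < j := p.parts_pos hj
    have hj2 : j ≤ t := by
      simpa [p.parts_sum] using Multiset.single_le_sum (fun _ _ => Nat.zero_le _) _ hj
    rw [mem_map]
    exact ⟨j - 1, mem_range.mpr (by omega), Nat.succ_pred_eq_of_pos hj1⟩
  norm_cast
  rw [filter_true_of_mem (fun p _ => hall p), card_univ]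
  rfl

end
end Stmt11
namespace Stmt11
open Finset PowerSeries Theorems100
open scoped Classical
noncomputable section

def allowedSet (L : ℕ) : Finset ℕ :=
  ((range (6 * L)).map succEmb).filter fun k => k % 6 ≠ 2 ∧ k % 6 ≠ 4

def DGF (L : ℕ) : PowerSeries R2 := ∏ k ∈ allowedSet L, (1 + X ^ k)

def oddEmb : ℕ ↪ ℕ := ⟨fun i => 2 * i + 1, fun a b h => by simp only [] at h; omega⟩
def sixEmb : ℕ ↪ ℕ := ⟨fun i => 6 * (i + 1), fun a b h => by simp only [] at h; omega⟩

lemma allowed_split (L : ℕ) :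
    allowedSet L = (range (3 * L)).map oddEmb ∪ (range L).map sixEmb := by
  ext k
  simp only [allowedSet, mem_filter, mem_map, mem_union, mem_range, succEmb, oddEmb, sixEmb,
    Function.Embedding.coeFn_mk, DFunLike.coe]
  constructor
  · rintro ⟨⟨a, ha, rfl⟩, h2, h4⟩
    rcases Nat.mod_two_eq_zero_or_one (a + 1) with he | ho
    · right
      exact ⟨(a + 1) / 6 - 1, by omega, by omega⟩
    · left
      exact ⟨a / 2, by omega, by omega⟩
  · rintro (⟨a, ha, rfl⟩ | ⟨a, ha, rfl⟩)
    · exact ⟨⟨2 * a, by omega, by omega⟩, by omega, by omega⟩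
    · exact ⟨⟨6 * a + 5, by omega, by omega⟩, by omega, by omega⟩

lemma split_disj (L : ℕ) : Disjoint ((range (3 * L)).map oddEmb) ((range L).map sixEmb) := by
  simp only [disjoint_left, mem_map, mem_range, oddEmb, sixEmb, Function.Embedding.coeFn_mk, DFunLike.coe]
  rintro k ⟨a, -, rfl⟩ ⟨b, -, h⟩
  omega

lemma dgf_eq (L : ℕ) : DGF L = OddP (3 * L) * Qp 0 L := by
  rw [DGF, allowed_split, prod_union (split_disj L), Finset.prod_map, Finset.prod_map,
    OddP, Qp, range_eq_Ico, range_eq_Ico]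
  rfl

lemma allowed_pos {L : ℕ} : ∀ i ∈ allowedSet L, 0 < i := by
  intro i hi
  simp only [allowedSet, mem_filter, mem_map, mem_range, succEmb,
    Function.Embedding.coeFn_mk] at hi
  obtain ⟨⟨a, -, rfl⟩, -⟩ := hi
  exact a.succ_pos

lemma coeff_DGF (n : ℕ) : coeff n (DGF (n + 1)) = (Q2 n : R2) := by
  have hprop := partialGF_prop R2 n (allowedSet (n + 1)) allowed_pos
      (fun _ => {0, 1}) (fun _ _ => Or.inl _root_.rfl)
  have hgf : (∏ i ∈ allowedSet (n + 1), indicatorSeries R2 ((· * i) '' {0, 1})) = DGF (n + 1) := by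
    rw [DGF]
    refine Finset.prod_congr _root_.rfl fun i hi => ?_
    obtain ⟨a, rfl⟩ : ∃ a, i = a + 1 := ⟨i - 1, by have := allowed_pos i hi; omega⟩
    have himg : ((· * (a + 1)) '' {0, 1} : Set ℕ) = {0, a + 1} := by
      rw [Set.image_pair]
      simp
    rw [himg, ← two_series]
  rw [hgf] at hprop
  rw [← hprop, Q2, Fintype.card_subtype]
  have hiff : ∀ p ∈ (univ : Finset (Nat.Partition n)),
      ((∀ j, Multiset.count j p.parts ∈ (fun _ => ({0, 1} : Set ℕ)) j) ∧
        ∀ j ∈ p.parts, j ∈ allowedSet (n + 1)) ↔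
      (p.parts.Nodup ∧ ∀ i ∈ p.parts, ¬i % 6 = 2 ∧ ¬i % 6 = 4) := by
    refine fun p _ => ?_
    have hparts : ∀ j ∈ p.parts, 0 < j ∧ j ≤ n := by
      intro j hj
      refine ⟨p.parts_pos hj, ?_⟩
      simpa [p.parts_sum] using Multiset.single_le_sum (fun _ _ => Nat.zero_le _) _ hj
    constructor
    · rintro ⟨hc, hmem⟩
      refine ⟨Multiset.nodup_iff_count_le_one.mpr fun j => ?_, fun i hi => ?_⟩
      · have := hc j
        simp only [Set.mem_insert_iff, Set.mem_singleton_iff] at this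
        omega
      · have := hmem i hi
        simp only [allowedSet, mem_filter] at this
        exact this.2
    · rintro ⟨hnd, hmod⟩
      refine ⟨fun j => ?_, fun j hj => ?_⟩
      · have := Multiset.nodup_iff_count_le_one.mp hnd j
        simp only [Set.mem_insert_iff, Set.mem_singleton_iff]
        omega
      · simp only [allowedSet, mem_filter, mem_map, mem_range, succEmb,
          Function.Embedding.coeFn_mk]
        obtain ⟨hj1, hj2⟩ := hparts j hj
        exact ⟨⟨j - 1, by omega, by omega⟩, hmod j hj⟩
  exact congrArg (Nat.cast : ℕ → R2) (congrArg Finset.card (Finset.filter_congr hiff))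

end
end Stmt11
namespace Stmt11
open Finset PowerSeries Theorems100
open scoped Classical
noncomputable section

lemma main_coeff (n : ℕ) :
    coeff n (Pent (n + 1) * pGF (3 * (n + 1))) = (Q2 n : R2) := by
  have h1 : EqF n (Pent (n + 1)) (Qp 0 (n + 1)) := pent_eqf n
  have h2 : EqF n (pGF (3 * (n + 1))) (OddP (3 * (n + 1))) :=
    (eqf_oddp_pgf (by omega)).symm
  have h3 := EqF.mul h1 h2 n le_rfl
  rw [h3, show Qp 0 (n + 1) * OddP (3 * (n + 1)) = DGF (n + 1) by rw [dgf_eq]; ring,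
    coeff_DGF n]

lemma coeff_term (n e : ℕ) :
    coeff n (X ^ e * pGF (3 * (n + 1))) = ((pz ((n : ℤ) - e)) : R2) := by
  rw [mul_comm, PowerSeries.coeff_mul_X_pow']
  by_cases he : e ≤ n
  · rw [if_pos he, coeff_pGF (by omega)]
    simp only [pz, if_pos (show (0 : ℤ) ≤ (n : ℤ) - e by omega)]
    have ht : ((n : ℤ) - e).toNat = n - e := by omega
    rw [ht]
    push_cast
    rfl
  · rw [if_neg he]
    simp only [pz, if_neg (show ¬(0 : ℤ) ≤ (n : ℤ) - e by omega)]
    simp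

lemma lhs_coeff (n : ℕ) :
    coeff n (Pent (n + 1) * pGF (3 * (n + 1)))
      = (∑ k ∈ range (n + 2), ((pz ((n : ℤ) - 3 * k * (3 * k + 1))) : R2))
        + ∑ k ∈ range (n + 1), ((pz ((n : ℤ) - 3 * (k + 1) * (3 * k + 2))) : R2) := by
  rw [Pent, add_mul, sum_mul, sum_mul, map_add, map_sum, map_sum]
  congr 1
  · refine sum_congr _root_.rfl fun k _ => ?_
    rw [coeff_term]
    congr 1
  · refine sum_congr _root_.rfl fun k _ => ?_
    rw [coeff_term]
    congr 1

end
end Stmt11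

theorem stmt11 (n : ℕ) :
    (∑ j ∈ Finset.Icc (-(n : ℤ) - 1) ((n : ℤ) + 1),
        pz ((n : ℤ) - 3 * j * (3 * j - 1))) ≡ (Q2 n : ℤ) [ZMOD 2] := by
  refine (ZMod.intCast_eq_intCast_iff _ _ _).mp ?_
  rw [Int.cast_sum]
  have hsplit : Finset.Icc (-(n : ℤ) - 1) ((n : ℤ) + 1)
      = Finset.Icc (-(n : ℤ) - 1) 0 ∪ Finset.Icc 1 ((n : ℤ) + 1) := by
    ext x
    simp only [Finset.mem_Icc, Finset.mem_union]
    omega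
  have hdisj : Disjoint (Finset.Icc (-(n : ℤ) - 1) 0) (Finset.Icc 1 ((n : ℤ) + 1)) := by
    simp only [Finset.disjoint_left, Finset.mem_Icc]
    rintro x ⟨-, h2⟩ ⟨h3, -⟩
    omega
  have himg1 : Finset.Icc (-(n : ℤ) - 1) 0
      = (Finset.range (n + 2)).image (fun k : ℕ => -(k : ℤ)) := by
    ext x
    simp only [Finset.mem_Icc, Finset.mem_image, Finset.mem_range]
    constructor
    · intro hx
      exact ⟨(-x).toNat, by omega, by omega⟩
    · rintro ⟨k, hk, rfl⟩
      omega
  have himg2 : Finset.Icc (1 : ℤ) ((n : ℤ) + 1)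
      = (Finset.range (n + 1)).image (fun k : ℕ => (k : ℤ) + 1) := by
    ext x
    simp only [Finset.mem_Icc, Finset.mem_image, Finset.mem_range]
    constructor
    · intro hx
      exact ⟨(x - 1).toNat, by omega, by omega⟩
    · rintro ⟨k, hk, rfl⟩
      omega
  rw [hsplit, Finset.sum_union hdisj, himg1, himg2,
    Finset.sum_image (by intro a _ b _ h; simp only at h; omega),
    Finset.sum_image (by intro a _ b _ h; simp only at h; omega)]
  have e1 : ∀ k : ℕ, (n : ℤ) - 3 * (-(k : ℤ)) * (3 * (-(k : ℤ)) - 1)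
      = (n : ℤ) - 3 * k * (3 * k + 1) := by intro k; ring
  have e2 : ∀ k : ℕ, (n : ℤ) - 3 * ((k : ℤ) + 1) * (3 * ((k : ℤ) + 1) - 1)
      = (n : ℤ) - 3 * (k + 1) * (3 * k + 2) := by intro k; ring
  simp only [e1, e2]
  rw [← Stmt11.lhs_coeff n, Stmt11.main_coeff n]
  push_cast
  rfl
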